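/- The moment generating function of the Hoyt SNR distribution: for 0 < q ≤ 1, γ̄ > 0, and s ≤ 0 (or any real s such that 1 - 2sγ̄ + (2sγ̄q/(1+q²))² > 0 and the integral converges), ∫₀^∞ e^{sγ} · ((1+q²)/(2q γ̄)) · exp(-(1+q²)² γ/(4q² γ̄)) · I₀((1-q⁴) γ/(4q² γ̄)) dγ = 1/√(1 - 2sγ̄ + (2sγ̄ q/(1+q²))²). -/

import Mathlib

open MeasureTheory Real Polynomial Finset

/-- Modified Bessel function of the first kind of order 0. -/
noncomputable def besselI0 (x : ℝ) : ℝ :=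
  ∑' k : ℕ, (x / 2) ^ (2 * k) / (Nat.factorial k : ℝ) ^ 2

/-- the MGF of the Hoyt SNR distribution.  For `0 < q ≤ 1`, `γ̄ > 0` and any
real `s` for which the integral converges (the exponential decay rate
`(1+q²)²/(4q²γ̄) - s` must exceed the Bessel growth rate `(1-q⁴)/(4q²γ̄)`, i.e.
`s < (1+q²)/(2γ̄)` since `(1+q²)² - (1-q⁴) = 2q²(1+q²)`),
`∫₀^∞ e^{sγ} p_γ(γ) dγ = 1/√(1 - 2sγ̄ + (2sγ̄q/(1+q²))²)`. -/

theorem chooseR_succ (r : ℝ) (k : ℕ) : Ring.choose r (k+1) * ((k:ℝ)+1) = Ring.choose r k * (r - k) := by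
  have h1 := Ring.descPochhammer_eq_factorial_smul_choose (R := ℝ) r (k+1)
  have h2 := Ring.descPochhammer_eq_factorial_smul_choose (R := ℝ) r k
  rw [descPochhammer_succ_right, smeval_mul, smeval_sub, smeval_X, smeval_natCast, h2] at h1
  rw [Nat.factorial_succ] at h1
  simp only [nsmul_eq_mul] at h1
  push_cast at h1
  have hkf : ((k.factorial : ℝ)) ≠ 0 := by positivity
  apply mul_left_cancel₀ hkf
  linear_combination -h1

noncomputable def cb (k : ℕ) : ℝ := ((2*k).factorial : ℝ) / ((k.factorial : ℝ))^2

theorem choose_neg_one (k : ℕ) : Ring.choose (-1 : ℝ) k = (-1)^k := by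
  induction k with
  | zero => simp [Ring.choose_zero_right]
  | succ k ih =>
    have h := chooseR_succ (-1) k
    rw [ih] at h
    have hk : ((k:ℝ)+1) ≠ 0 := by positivity
    apply mul_right_cancel₀ hk
    rw [h]; push_cast; ring

theorem choose_neg_half (k : ℕ) : Ring.choose (-(1/2) : ℝ) k = (-(1/4))^k * cb k := by
  induction k with
  | zero => simp [Ring.choose_zero_right, cb]
  | succ k ih =>
    have h := chooseR_succ (-(1/2)) k
    rw [ih] at h
    have hk : ((k:ℝ)+1) ≠ 0 := by positivity
    have hkf : ((k.factorial : ℝ)) ≠ 0 := by positivity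
    have hcb : cb (k+1) * ((k:ℝ)+1)^2 = cb k * ((2*k+1)*(2*k+2)) := by
      simp only [cb]
      rw [show (2*(k+1)) = (2*k+1)+1 by ring, Nat.factorial_succ, Nat.factorial_succ,
        Nat.factorial_succ]
      push_cast
      field_simp
      ring
    have h2 : ((k:ℝ)+1) * ((k:ℝ)+1) ≠ 0 := by positivity
    apply mul_right_cancel₀ hk
    rw [h]
    apply mul_right_cancel₀ hk
    calc (-(1/4):ℝ)^k * cb k * (-(1/2) - ↑k) * (↑k + 1)
        = (-(1/4))^k * (-(1/4)) * (cb k * ((2*k+1)*(2*k+2))) := by ring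
      _ = (-(1/4))^(k+1) * (cb (k+1) * ((k:ℝ)+1)^2) := by rw [← hcb]; ring
      _ = (-(1/4))^(k+1) * cb (k+1) * (↑k + 1) * (↑k + 1) := by ring

theorem cb_conv (n : ℕ) : ∑ ij ∈ antidiagonal n, cb ij.1 * cb ij.2 = 4^n := by
  have h := Ring.add_choose_eq (r := (-(1/2):ℝ)) (s := (-(1/2):ℝ)) n (mul_comm _ _)
  rw [show (-(1/2):ℝ) + (-(1/2)) = -1 by ring, choose_neg_one] at h
  have h2 : ((-1:ℝ))^n = (-(1/4))^n * ∑ ij ∈ antidiagonal n, cb ij.1 * cb ij.2 := by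
    rw [h, mul_sum]
    refine sum_congr rfl fun ij hij => ?_
    rw [choose_neg_half, choose_neg_half, ← mem_antidiagonal.mp hij, pow_add]
    ring
  calc ∑ ij ∈ antidiagonal n, cb ij.1 * cb ij.2
      = (-4:ℝ)^n * ((-(1/4):ℝ)^n * ∑ ij ∈ antidiagonal n, cb ij.1 * cb ij.2) := by
        rw [← mul_assoc, ← mul_pow]; norm_num
    _ = (-4:ℝ)^n * (-1:ℝ)^n := by rw [← h2]
    _ = 4^n := by rw [← mul_pow]; norm_num


theorem cb_nonneg (k : ℕ) : 0 ≤ cb k := by unfold cb; positivity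

theorem cb_eq (k : ℕ) : cb k = (Nat.centralBinom k : ℝ) := by
  unfold cb
  have h := Nat.choose_mul_factorial_mul_factorial (show k ≤ 2*k by omega)
  rw [Nat.centralBinom]
  rw [show 2*k - k = k by omega] at h
  have hkf : ((k.factorial : ℝ)) ≠ 0 := by positivity
  field_simp
  rw [← h]; push_cast; ring

theorem cb_le (k : ℕ) : cb k ≤ 4^k := by
  rw [cb_eq]
  have h1 : Nat.centralBinom k ≤ 2^(2*k) := by
    rw [← Nat.sum_range_choose (2*k), Nat.centralBinom]
    exact Finset.single_le_sum (f := fun m => (2*k).choose m) (fun i _ => Nat.zero_le _)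
      (Finset.mem_range.mpr (by omega))
  calc (Nat.centralBinom k : ℝ) ≤ ((2:ℕ)^(2*k) : ℕ) := by exact_mod_cast h1
    _ = 4^k := by push_cast [pow_mul]; norm_num

theorem cb_summable {t : ℝ} (ht : 0 ≤ t) (ht4 : 4*t < 1) :
    Summable (fun k => cb k * t^k) := by
  apply Summable.of_nonneg_of_le (fun k => mul_nonneg (cb_nonneg k) (pow_nonneg ht k))
    (fun k => ?_) (summable_geometric_of_lt_one (by linarith) ht4)
  calc cb k * t^k ≤ 4^k * t^k := by
        apply mul_le_mul_of_nonneg_right (cb_le k) (by positivity)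
    _ = (4*t)^k := by rw [mul_pow]

theorem cb_tsum {t : ℝ} (ht : 0 ≤ t) (ht4 : 4*t < 1) :
    ∑' k, cb k * t^k = 1 / Real.sqrt (1 - 4*t) := by
  set S := ∑' k, cb k * t^k with hS
  have hsum := cb_summable ht ht4
  have hnorm : Summable (fun k => ‖cb k * t^k‖) :=
    hsum.congr (fun k => (Real.norm_of_nonneg (mul_nonneg (cb_nonneg k) (pow_nonneg ht k))).symm)
  have hSq : S * S = (1 - 4*t)⁻¹ := by
    rw [hS, tsum_mul_tsum_eq_tsum_sum_antidiagonal_of_summable_norm hnorm hnorm]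
    rw [← tsum_geometric_of_lt_one (by linarith) ht4]
    congr 1
    funext n
    calc ∑ ij ∈ antidiagonal n, (cb ij.1 * t^ij.1) * (cb ij.2 * t^ij.2)
        = ∑ ij ∈ antidiagonal n, (cb ij.1 * cb ij.2) * t^n := by
          refine sum_congr rfl fun ij hij => ?_
          rw [← mem_antidiagonal.mp hij, pow_add]; ring
      _ = (∑ ij ∈ antidiagonal n, cb ij.1 * cb ij.2) * t^n := by rw [← sum_mul]
      _ = (4*t)^n := by rw [cb_conv, mul_pow]
  have hS0 : 0 ≤ S := tsum_nonneg (fun k => mul_nonneg (cb_nonneg k) (pow_nonneg ht k))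
  have : S = Real.sqrt ((1-4*t)⁻¹) := by
    rw [← hSq, Real.sqrt_mul_self hS0]
  rw [this, Real.sqrt_inv, one_div]

theorem besselI0_laplace {b lam : ℝ} (hb : 0 ≤ b) (hlt : b < lam) :
    ∫ x in Set.Ioi (0:ℝ), Real.exp (-(lam*x)) * besselI0 (b*x)
      = 1 / Real.sqrt (lam^2 - b^2) := by
  have hlam : 0 < lam := lt_of_le_of_lt hb hlt
  set g : ℕ → ℝ → ℝ := fun k x =>
    Real.exp (-(lam*x)) * (((b*x/2)^2)^k / (Nat.factorial k : ℝ)^2) with hg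
  have hgdef : ∀ k x, g k x = Real.exp (-(lam*x)) * (((b*x/2)^2)^k / (Nat.factorial k : ℝ)^2) :=
    fun k x => rfl
  set t : ℝ := (b/(2*lam))^2 with htdef
  have ht : 0 ≤ t := sq_nonneg _
  have ht4 : 4*t < 1 := by
    rw [htdef, div_pow, ← mul_div_assoc, div_lt_one (by positivity)]
    nlinarith
  -- pointwise identity
  have hpt : ∀ x : ℝ, Real.exp (-(lam*x)) * besselI0 (b*x) = ∑' k, g k x := by
    intro x
    rw [besselI0, ← tsum_mul_left]
    congr 1; funext k
    rw [hgdef, ← pow_mul]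
  -- integrability of the power-exponential
  have Ig : ∀ k : ℕ, IntegrableOn (fun x : ℝ => x^(2*k) * Real.exp (-(lam*x)))
      (Set.Ioi 0) := by
    intro k
    have h := integrableOn_rpow_mul_exp_neg_mul_rpow
      (show (-1:ℝ) < (2*k:ℕ) from lt_of_lt_of_le (by norm_num) (Nat.cast_nonneg _))
      (zero_lt_one : (0:ℝ) < 1) hlam
    apply h.congr_fun ?_ measurableSet_Ioi
    intro x hx
    simp only [Real.rpow_one, Real.rpow_natCast, neg_mul]
  -- value of the power-exponential integral
  have T : ∀ k : ℕ, ∫ x in Set.Ioi (0:ℝ), x^(2*k) * Real.exp (-(lam*x))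
      = ((2*k).factorial : ℝ) / lam^(2*k+1) := by
    intro k
    have h := Real.integral_rpow_mul_exp_neg_mul_Ioi
      (show (0:ℝ) < (2*k:ℕ) + 1 by positivity) hlam
    rw [show ((2*k:ℕ):ℝ) + 1 - 1 = ((2*k:ℕ):ℝ) by ring] at h
    rw [show ((2*k:ℕ):ℝ) + 1 = (((2*k+1:ℕ)):ℝ) by push_cast; ring] at h
    rw [Real.rpow_natCast] at h
    have hΓ : Real.Gamma (((2*k+1:ℕ)):ℝ) = ((2*k).factorial : ℝ) := by
      rw [show (((2*k+1:ℕ)):ℝ) = ((2*k:ℕ):ℝ) + 1 by push_cast; ring]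
      exact Real.Gamma_nat_eq_factorial (2*k)
    rw [hΓ] at h
    calc ∫ x in Set.Ioi (0:ℝ), x^(2*k) * Real.exp (-(lam*x))
        = ∫ x in Set.Ioi (0:ℝ), x ^ ((2*k:ℕ):ℝ) * Real.exp (-(lam*x)) := by
          refine setIntegral_congr_fun measurableSet_Ioi (fun x hx => ?_)
          rw [Real.rpow_natCast]
      _ = (1/lam)^(2*k+1) * ((2*k).factorial : ℝ) := h
      _ = ((2*k).factorial : ℝ) / lam^(2*k+1) := by
          rw [one_div, inv_pow]; ring
  -- integrability of g k
  have Ig' : ∀ k : ℕ, IntegrableOn (g k) (Set.Ioi 0) := by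
    intro k
    have : g k = fun x => ((b/2)^(2*k) / (Nat.factorial k : ℝ)^2) *
        (x^(2*k) * Real.exp (-(lam*x))) := by
      funext x; rw [hgdef, ← pow_mul]; ring
    rw [this]
    exact (Ig k).const_mul _
  -- value of ∫ g k
  have V : ∀ k : ℕ, ∫ x in Set.Ioi (0:ℝ), g k x = (1/lam) * (cb k * t^k) := by
    intro k
    have h1 : ∫ x in Set.Ioi (0:ℝ), g k x = ((b/2)^(2*k) / (Nat.factorial k : ℝ)^2) *
        (((2*k).factorial : ℝ) / lam^(2*k+1)) := by
      rw [← T k, ← integral_const_mul]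
      refine setIntegral_congr_fun measurableSet_Ioi (fun x hx => ?_)
      rw [hgdef, ← pow_mul]; ring
    rw [h1, htdef, cb, ← pow_mul]
    have hkf : ((Nat.factorial k : ℝ)) ≠ 0 := by positivity
    have hl0 : lam ≠ 0 := hlam.ne'
    field_simp
    have hP : lam ^ (k*2) * lam⁻¹ ^ (k*2) = 1 := by rw [← mul_pow, mul_inv_cancel₀ hl0, one_pow]
    linear_combination (-(b ^ (k * 2) * lam * (1 / 2) ^ (k * 2))) * hP
  -- summability of values
  have hVsum : Summable (fun k => (1/lam) * (cb k * t^k)) :=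
    (cb_summable ht ht4).mul_left _
  -- nonnegativity of g
  have hg0 : ∀ k x, 0 ≤ g k x := by
    intro k x; rw [hgdef]; positivity
  -- swap
  have hswap : ∫ x in Set.Ioi (0:ℝ), ∑' k, g k x = ∑' k, ∫ x in Set.Ioi (0:ℝ), g k x := by
    refine integral_tsum (fun k => ?_) ?_
    · exact (Continuous.aestronglyMeasurable (by rw [hg]; fun_prop)).restrict
    · have hlint : ∀ k : ℕ, ∫⁻ x in Set.Ioi (0:ℝ), ‖g k x‖ₑ
          = ENNReal.ofReal ((1/lam) * (cb k * t^k)) := by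
        intro k
        rw [← V k, ofReal_integral_eq_lintegral_ofReal (Ig' k)
          (Filter.Eventually.of_forall (fun x => hg0 k x))]
        refine lintegral_congr fun x => ?_
        rw [Real.enorm_eq_ofReal (hg0 k x)]
      simp_rw [hlint]
      rw [← ENNReal.ofReal_tsum_of_nonneg (fun k => by
        exact mul_nonneg (by positivity) (mul_nonneg (cb_nonneg k) (pow_nonneg ht k))) hVsum]
      exact ENNReal.ofReal_ne_top
  -- put together
  have hfin : Real.sqrt (1 - 4*t) = Real.sqrt (lam^2 - b^2) / lam := by
    rw [show 1 - 4*t = (lam^2 - b^2)/lam^2 by rw [htdef]; field_simp; ring,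
      Real.sqrt_div (by nlinarith), Real.sqrt_sq hlam.le]
  have hsq : 0 < Real.sqrt (lam^2 - b^2) := Real.sqrt_pos.mpr (by nlinarith)
  calc ∫ x in Set.Ioi (0:ℝ), Real.exp (-(lam*x)) * besselI0 (b*x)
      = ∫ x in Set.Ioi (0:ℝ), ∑' k, g k x :=
        setIntegral_congr_fun measurableSet_Ioi (fun x _ => hpt x)
    _ = ∑' k, ∫ x in Set.Ioi (0:ℝ), g k x := hswap
    _ = (1/lam) * ∑' k, cb k * t^k := by simp_rw [V]; rw [tsum_mul_left]
    _ = (1/lam) * (1 / Real.sqrt (1-4*t)) := by rw [cb_tsum ht ht4]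
    _ = 1 / Real.sqrt (lam^2 - b^2) := by
        rw [hfin]; field_simp

theorem hoyt_mgf (q γbar s : ℝ) (hq : 0 < q) (hq1 : q ≤ 1) (hγ : 0 < γbar)
    (hs : s < (1 + q ^ 2) / (2 * γbar)) :
    ∫ γ in Set.Ioi (0 : ℝ),
        Real.exp (s * γ) * (((1 + q ^ 2) / (2 * q * γbar)) *
          Real.exp (-((1 + q ^ 2) ^ 2 * γ) / (4 * q ^ 2 * γbar)) *
          besselI0 ((1 - q ^ 4) * γ / (4 * q ^ 2 * γbar)))
      = 1 / Real.sqrt (1 - 2 * s * γbar + (2 * s * γbar * q / (1 + q ^ 2)) ^ 2) := by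
  set K : ℝ := (1 + q ^ 2) / (2 * q * γbar) with hK
  set b : ℝ := (1 - q ^ 4) / (4 * q ^ 2 * γbar) with hb
  set lam : ℝ := (1 + q ^ 2) ^ 2 / (4 * q ^ 2 * γbar) - s with hlam
  have hq2 : (0:ℝ) < 1 + q^2 := by positivity
  have hb0 : 0 ≤ b := by
    rw [hb]
    apply div_nonneg _ (by positivity)
    nlinarith [pow_le_one₀ hq.le hq1 (n := 4)]
  have hblam : b < lam := by
    rw [hb, hlam]
    have : (1 + q ^ 2) ^ 2 / (4 * q ^ 2 * γbar) - (1 - q ^ 4) / (4 * q ^ 2 * γbar)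
        = (1 + q ^ 2) / (2 * γbar) := by
      field_simp
      ring
    linarith [this]
  have hK0 : 0 < K := by rw [hK]; positivity
  set D : ℝ := 1 - 2 * s * γbar + (2 * s * γbar * q / (1 + q ^ 2)) ^ 2 with hD
  have hDK : lam^2 - b^2 = K^2 * D := by
    rw [hlam, hb, hK, hD]
    field_simp
    ring
  have hD0 : 0 < D := by
    have h1 : 0 < lam^2 - b^2 := by nlinarith
    nlinarith [sq_nonneg K]
  -- transform integrand
  have step1 : ∫ γ in Set.Ioi (0 : ℝ),
        Real.exp (s * γ) * (((1 + q ^ 2) / (2 * q * γbar)) *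
          Real.exp (-((1 + q ^ 2) ^ 2 * γ) / (4 * q ^ 2 * γbar)) *
          besselI0 ((1 - q ^ 4) * γ / (4 * q ^ 2 * γbar)))
      = ∫ γ in Set.Ioi (0 : ℝ), K * (Real.exp (-(lam * γ)) * besselI0 (b * γ)) := by
    refine setIntegral_congr_fun measurableSet_Ioi (fun γ _ => ?_)
    rw [show (1 - q ^ 4) * γ / (4 * q ^ 2 * γbar) = b * γ by rw [hb]; ring]
    rw [show -(lam * γ) = s * γ + -((1 + q ^ 2) ^ 2 * γ) / (4 * q ^ 2 * γbar) by
      rw [hlam]; field_simp; ring]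
    rw [Real.exp_add, hK]
    ring
  rw [step1, integral_const_mul, besselI0_laplace hb0 hblam, hDK]
  rw [Real.sqrt_mul (sq_nonneg K), Real.sqrt_sq hK0.le]
  have hsD : 0 < Real.sqrt D := Real.sqrt_pos.mpr hD0
  field_simp
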